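/- Let E ⊆ [0,∞) be completely strongly porous and let L̃ = {(lₙ,mₙ)} ∈ Ĩ_E^{sd} be universal. Then M(L̃) := limsup_{n→∞} lₙ/mₙ₊₁ < ∞. -/

import Mathlib

open Filter Set Topology ENNReal

/-- λ(E,0,h): the supremum of lengths of open subintervals of (0,h) disjoint from E. -/
noncomputable def lambda0 (E : Set ℝ) (h : ℝ) : ℝ :=
  sSup {l : ℝ | ∃ a b : ℝ, 0 ≤ a ∧ a ≤ b ∧ b ≤ h ∧ Set.Ioo a b ∩ E = ∅ ∧ l = b - a}

/-- p⁺(E,0): the right porosity of E at 0. -/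
noncomputable def porosity (E : Set ℝ) : ℝ :=
  Filter.limsup (fun h => lambda0 E h / h) (nhdsWithin 0 (Set.Ioi 0))

/-- 0 is an accumulation point of E (E ⊆ [0,∞), relative topology of [0,∞)). -/
def AccZero (E : Set ℝ) : Prop := ∀ ε > 0, ∃ x ∈ E, 0 < x ∧ x < ε

/-- (a,b) is a connected component of the exterior of E in [0,∞):
an open interval in [0,∞) disjoint from E, maximal with this property. -/
def IsCompExt (E : Set ℝ) (a b : ℝ) : Prop :=
  0 ≤ a ∧ a < b ∧ Set.Ioo a b ∩ E = ∅ ∧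
  ∀ c d : ℝ, 0 ≤ c → Set.Ioo a b ⊆ Set.Ioo c d → (c, d) ≠ (a, b) → Set.Ioo c d ∩ E ≠ ∅

/-- Membership in Ĩ_E. -/
def memIE (E : Set ℝ) (A : ℕ → ℝ × ℝ) : Prop :=
  (∀ n, 0 < (A n).1) ∧ (∀ n, IsCompExt E (A n).1 (A n).2) ∧
  Filter.Tendsto (fun n => (A n).1) Filter.atTop (nhds 0) ∧
  Filter.Tendsto (fun n => ((A n).2 - (A n).1) / (A n).2) Filter.atTop (nhds 1)

/-- Almost decreasing sequence: eventually nonincreasing. -/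
def AlmostDecr (τ : ℕ → ℝ) : Prop := ∀ᶠ n in Filter.atTop, τ (n + 1) ≤ τ n

/-- Membership in Ẽ₀^d: almost decreasing sequences in E∖{0} tending to 0. -/
def memE0d (E : Set ℝ) (τ : ℕ → ℝ) : Prop :=
  AlmostDecr τ ∧ Filter.Tendsto τ Filter.atTop (nhds 0) ∧ ∀ n, τ n ∈ E \ {0}

/-- Weak equivalence ≍ of sequences: c₁ aₙ ≤ γₙ ≤ c₂ aₙ for large n. -/
def SeqEquiv (a γ : ℕ → ℝ) : Prop :=
  ∃ c₁ c₂ : ℝ, 0 < c₁ ∧ 0 < c₂ ∧ ∀ᶠ n in Filter.atTop, c₁ * a n ≤ γ n ∧ γ n ≤ c₂ * a n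

/-- E is τ̃-strongly porous. -/
def StronglyPorousWrt (E : Set ℝ) (τ : ℕ → ℝ) : Prop :=
  ∃ A : ℕ → ℝ × ℝ, memIE E A ∧ SeqEquiv (fun n => (A n).1) τ

/-- E is completely strongly porous at 0. -/
def CSP (E : Set ℝ) : Prop := ∀ τ : ℕ → ℝ, memE0d E τ → StronglyPorousWrt E τ

/-- Membership in Ĩ_E^d: first coordinates almost decreasing. -/
def memIEd (E : Set ℝ) (A : ℕ → ℝ × ℝ) : Prop := memIE E A ∧ AlmostDecr (fun n => (A n).1)

/-- Membership in Ĩ_E^{sd}: first coordinates eventually strictly decreasing. -/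
def memIEsd (E : Set ℝ) (A : ℕ → ℝ × ℝ) : Prop :=
  memIE E A ∧ ∀ᶠ n in Filter.atTop, (A (n + 1)).1 < (A n).1

/-- The preorder Ã ⪯ L̃. -/
def Prec (A L : ℕ → ℝ × ℝ) : Prop :=
  ∃ N₁ : ℕ, ∃ f : ℕ → ℕ, ∀ n ≥ N₁, (A n).1 = (L (f n)).1

/-- L̃ is universal: every Ã ∈ Ĩ_E^d satisfies Ã ⪯ L̃. -/
def Universal (E : Set ℝ) (L : ℕ → ℝ × ℝ) : Prop :=
  ∀ A : ℕ → ℝ × ℝ, memIEd E A → Prec A L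

/-- M(L̃) = limsup lₙ/mₙ₊₁ (in [0,∞]). -/
noncomputable def Mq (L : ℕ → ℝ × ℝ) : ℝ≥0∞ :=
  Filter.limsup (fun n => ENNReal.ofReal ((L n).1 / (L (n + 1)).2)) Filter.atTop

/-- C(τ̃) = inf over {(aₙ,bₙ)} ∈ Ĩ_E with τₙ ≤ aₙ eventually of limsup aₙ/τₙ. -/
noncomputable def Cseq (E : Set ℝ) (τ : ℕ → ℝ) : ℝ≥0∞ :=
  ⨅ (A : ℕ → ℝ × ℝ) (_ : memIE E A ∧ ∀ᶠ n in Filter.atTop, τ n ≤ (A n).1),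
    Filter.limsup (fun n => ENNReal.ofReal ((A n).1 / τ n)) Filter.atTop

/-- C_E = sup over τ̃ ∈ Ẽ₀^d of C(τ̃). -/
noncomputable def CE (E : Set ℝ) : ℝ≥0∞ := ⨆ (τ : ℕ → ℝ) (_ : memE0d E τ), Cseq E τ

/-- E is uniformly strongly porous at 0. -/
def USP (E : Set ℝ) : Prop :=
  ∃ c : ℝ, 0 < c ∧ ∀ τ : ℕ → ℝ, memE0d E τ → ∃ A : ℕ → ℝ × ℝ, memIE E A ∧
    (∀ᶠ n in Filter.atTop, τ n ≤ (A n).1) ∧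
    Filter.limsup (fun n => ENNReal.ofReal ((A n).1 / τ n)) Filter.atTop ≤ ENNReal.ofReal c


lemma comp_disjoint (E : Set ℝ) {a b a' b' : ℝ} (h : IsCompExt E a b)
    (h' : IsCompExt E a' b') (hlt : a < a') : b ≤ a' := by
  by_contra hb
  push_neg at hb
  rcases le_or_gt b' b with hbb | hbb
  · exact h'.2.2.2 a b h.1 (Set.Ioo_subset_Ioo hlt.le hbb)
      (fun heq => hlt.ne (Prod.ext_iff.mp heq).1) h.2.2.1
  · have hne : Set.Ioo a b' ∩ E ≠ ∅ :=
      h.2.2.2 a b' h.1 (Set.Ioo_subset_Ioo le_rfl hbb.le)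
        (fun heq => hbb.ne' (Prod.ext_iff.mp heq).2)
    obtain ⟨x, hx1, hx2⟩ := Set.nonempty_iff_ne_empty.mpr hne
    rcases lt_or_ge x b with hxb | hxb
    · exact Set.eq_empty_iff_forall_notMem.mp h.2.2.1 x ⟨⟨hx1.1, hxb⟩, hx2⟩
    · exact Set.eq_empty_iff_forall_notMem.mp h'.2.2.1 x ⟨⟨lt_of_lt_of_le hb hxb, hx1.2⟩, hx2⟩

lemma right_touch (E : Set ℝ) {a b : ℝ} (h : IsCompExt E a b) {d : ℝ} (hd : b < d) :
    ∃ t ∈ E, b ≤ t ∧ t < d := by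
  have hne : Set.Ioo a d ∩ E ≠ ∅ :=
    h.2.2.2 a d h.1 (Set.Ioo_subset_Ioo le_rfl hd.le)
      (fun heq => hd.ne' (Prod.ext_iff.mp heq).2)
  obtain ⟨x, hx1, hx2⟩ := Set.nonempty_iff_ne_empty.mpr hne
  refine ⟨x, hx2, ?_, hx1.2⟩
  by_contra hxb
  push_neg at hxb
  exact Set.eq_empty_iff_forall_notMem.mp h.2.2.1 x ⟨⟨hx1.1, hxb⟩, hx2⟩

theorem stmt10 (E : Set ℝ) (hE : E ⊆ Set.Ici 0) (hCSP : CSP E) (L : ℕ → ℝ × ℝ)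
    (hL : memIEsd E L) (hUniv : Universal E L) :
    Mq L < ⊤ := by
  by_contra hlt
  have hM : Mq L = ⊤ := top_le_iff.mp (not_lt.mp hlt)
  obtain ⟨hLIE, hLsd⟩ := hL
  obtain ⟨hlpos, hcomp, hl0, hratio⟩ := hLIE
  set l : ℕ → ℝ := fun n => (L n).1 with hldef
  set r : ℕ → ℝ := fun n => (L n).2 with hrdef
  have hlr : ∀ n, l n < r n := fun n => (hcomp n).2.1
  have hrpos : ∀ n, 0 < r n := fun n => (hlpos n).trans (hlr n)
  obtain ⟨N₀, hN₀⟩ := eventually_atTop.mp hLsd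
  have hanti : ∀ i j, N₀ ≤ i → i ≤ j → l j ≤ l i := by
    intro i j hi hij
    induction j, hij using Nat.le_induction with
    | base => exact le_rfl
    | succ j hj ih => exact le_trans (hN₀ j (le_trans hi hj)).le ih
  have hrl : ∀ n, N₀ ≤ n → r (n + 1) ≤ l n :=
    fun n hn => comp_disjoint E (hcomp (n + 1)) (hcomp n) (hN₀ n hn)
  -- frequently large ratio
  have hfreq : ∀ c : ℝ, ∃ᶠ n in atTop, c * r (n + 1) < l n := by
    intro c
    have hfr : ∃ᶠ n in atTop, ENNReal.ofReal c < ENNReal.ofReal (l n / r (n + 1)) := by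
      by_contra hcon
      rw [Filter.not_frequently] at hcon
      have hle : Mq L ≤ ENNReal.ofReal c := by
        refine Filter.limsup_le_of_le (by isBoundedDefault) ?_
        exact hcon.mono fun n hn => not_lt.mp hn
      rw [hM] at hle
      exact absurd (lt_of_le_of_lt hle ENNReal.ofReal_lt_top) (lt_irrefl ⊤)
    refine hfr.mono fun n hn => ?_
    have h1 : c < l n / r (n + 1) := by
      by_contra hle
      push_neg at hle
      exact absurd (ENNReal.ofReal_le_ofReal hle) (not_le.mpr hn)
    exact (lt_div_iff₀ (hrpos (n + 1))).mp h1
  have key : ∀ c ε : ℝ, 0 < ε → ∃ n, N₀ ≤ n ∧ c * r (n + 1) < l n ∧ 2 * r (n + 1) ≤ ε := by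
    intro c ε hε
    have hev : ∀ᶠ n in atTop, N₀ ≤ n ∧ 2 * r (n + 1) ≤ ε := by
      have h1 : ∀ᶠ n in atTop, l n < ε / 2 := hl0.eventually (gt_mem_nhds (by linarith))
      filter_upwards [h1, eventually_ge_atTop N₀] with n h1 h2
      exact ⟨h2, by have := hrl n h2; linarith⟩
    obtain ⟨n, hn⟩ := ((hfreq c).and_eventually hev).exists
    exact ⟨n, hn.2.1, hn.1, hn.2.2⟩
  -- recursive choice of indices
  set P : ℕ → ℕ → Prop := fun k n => N₀ ≤ n ∧ ((k : ℝ) + 2) * r (n + 1) < l n with hPdef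
  obtain ⟨g0, hg0⟩ : ∃ n, P 0 n := by
    obtain ⟨n, h1, h2, _⟩ := key 2 1 one_pos
    exact ⟨n, h1, by push_cast; linarith⟩
  have hstepex : ∀ k prev : ℕ, ∃ n, P (k + 1) n ∧
      2 * r (n + 1) ≤ r (prev + 1) / ((k : ℝ) + 3) := by
    intro k prev
    obtain ⟨n, h1, h2, h3⟩ := key (((k : ℝ) + 1) + 2) (r (prev + 1) / ((k : ℝ) + 3))
      (div_pos (hrpos _) (by positivity))
    refine ⟨n, ⟨h1, ?_⟩, h3⟩
    · push_cast
      linarith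
  choose st hst1 hst2 using hstepex
  set g : ℕ → ℕ := fun k => Nat.rec g0 (fun k ih => st k ih) k with hgdef
  have hgsucc : ∀ k, g (k + 1) = st k (g k) := fun k => rfl
  have hgP : ∀ k, P k (g k) := by
    intro k
    cases k with
    | zero => exact hg0
    | succ k => rw [hgsucc]; exact hst1 k (g k)
  have hgchain : ∀ k, 2 * r (g (k + 1) + 1) ≤ r (g k + 1) / ((k : ℝ) + 3) := by
    intro k; rw [hgsucc]; exact hst2 k (g k)
  -- the sequence τ
  have hτex : ∀ k, ∃ t ∈ E, r (g k + 1) ≤ t ∧ t < 2 * r (g k + 1) := by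
    intro k
    exact right_touch E (hcomp (g k + 1)) (by linarith [hrpos (g k + 1)])
  choose τ hτE hτ1 hτ2 using hτex
  have hτpos : ∀ k, 0 < τ k := fun k => lt_of_lt_of_le (hrpos _) (hτ1 k)
  have hτdec : ∀ k, τ (k + 1) ≤ τ k / ((k : ℝ) + 3) := by
    intro k
    calc τ (k + 1) ≤ 2 * r (g (k + 1) + 1) := (hτ2 (k + 1)).le
      _ ≤ r (g k + 1) / ((k : ℝ) + 3) := hgchain k
      _ ≤ τ k / ((k : ℝ) + 3) := by gcongr; exact hτ1 k
  have hτhalf : ∀ k, τ (k + 1) ≤ τ k / 2 := by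
    intro k
    refine (hτdec k).trans ?_
    have hk0 : (0 : ℝ) ≤ (k : ℝ) := Nat.cast_nonneg k
    rw [div_le_div_iff₀ (by linarith) (by norm_num)]
    nlinarith [hτpos k]
  have hτmem : memE0d E τ := by
    refine ⟨Filter.Eventually.of_forall fun k => (hτhalf k).trans (by linarith [hτpos k]), ?_, ?_⟩
    · have hle : ∀ k, τ k ≤ τ 0 * (1 / 2 : ℝ) ^ k := by
        intro k
        induction k with
        | zero => simp
        | succ k ih =>
          calc τ (k + 1) ≤ τ k / 2 := hτhalf k
            _ ≤ (τ 0 * (1 / 2 : ℝ) ^ k) / 2 := by linarith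
            _ = τ 0 * (1 / 2 : ℝ) ^ (k + 1) := by ring
      have htt : Tendsto (fun k : ℕ => τ 0 * (1 / 2 : ℝ) ^ k) atTop (nhds (τ 0 * 0)) :=
        Tendsto.const_mul _ (tendsto_pow_atTop_nhds_zero_of_lt_one (by norm_num) (by norm_num))
      rw [mul_zero] at htt
      exact squeeze_zero (fun k => (hτpos k).le) hle htt
    · exact fun k => ⟨hτE k, (hτpos k).ne'⟩
  obtain ⟨A, hAIE, c₁, c₂, hc₁, hc₂, hbound⟩ := hCSP τ hτmem
  obtain ⟨hapos, hAcomp, ha0, haratio⟩ := hAIE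
  set a : ℕ → ℝ := fun k => (A k).1 with hadef
  set b : ℕ → ℝ := fun k => (A k).2 with hbdef
  have hab : ∀ k, a k < b k := fun k => (hAcomp k).2.1
  have hbpos : ∀ k, 0 < b k := fun k => (hapos k).trans (hab k)
  have hdiv : Tendsto (fun k => a k / b k) atTop (nhds 0) := by
    have h1 : Tendsto (fun k => 1 - (b k - a k) / b k) atTop (nhds (1 - 1)) :=
      Tendsto.const_sub 1 haratio
    rw [sub_self] at h1
    refine Tendsto.congr (fun k => ?_) h1
    have hb0 : b k ≠ 0 := (hbpos k).ne'
    field_simp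
    ring
  have hev1 : ∀ᶠ k in atTop, a k / b k < 1 / c₂ := hdiv.eventually (gt_mem_nhds (by positivity))
  have hτlea : ∀ᶠ k in atTop, τ k ≤ a k := by
    filter_upwards [hev1, hbound] with k h1 h2
    by_contra hcon
    push_neg at hcon
    have hnm : τ k ∉ Set.Ioo (a k) (b k) := fun hm =>
      Set.eq_empty_iff_forall_notMem.mp (hAcomp k).2.2.1 (τ k) ⟨hm, hτE k⟩
    have hbτ : b k ≤ τ k := by
      by_contra hb2
      push_neg at hb2
      exact hnm ⟨hcon, hb2⟩
    have h3 : b k ≤ c₂ * a k := hbτ.trans h2.2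
    have h4 : 1 / c₂ ≤ a k / b k := by
      rw [div_le_div_iff₀ hc₂ (hbpos k)]
      linarith
    linarith
  have hADa : AlmostDecr (fun k => a k) := by
    obtain ⟨K, hK⟩ := exists_nat_ge (c₂ / c₁)
    obtain ⟨K₀, hK₀⟩ := eventually_atTop.mp hbound
    refine eventually_atTop.mpr ⟨max K₀ K, fun k hk => ?_⟩
    have hbk := hK₀ k (le_trans (le_max_left _ _) hk)
    have hbk1 := hK₀ (k + 1) (le_trans (le_trans (le_max_left _ _) hk) (Nat.le_succ k))
    have h5 : τ (k + 1) * ((k : ℝ) + 3) ≤ τ k := by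
      have := hτdec k
      rw [le_div_iff₀ (by positivity : (0 : ℝ) < (k : ℝ) + 3)] at this
      exact this
    have h6 : c₂ ≤ c₁ * ((k : ℝ) + 3) := by
      have hKk : (K : ℝ) ≤ (k : ℝ) + 3 := by
        have : (K : ℝ) ≤ (k : ℝ) := by
          exact_mod_cast le_trans (le_max_right K₀ K) hk
        linarith
      calc c₂ = c₁ * (c₂ / c₁) := by field_simp
        _ ≤ c₁ * ((k : ℝ) + 3) := by
            apply mul_le_mul_of_nonneg_left _ hc₁.le
            linarith
    have h7 : c₁ * a (k + 1) ≤ τ (k + 1) := hbk1.1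
    have h8 : τ k ≤ c₂ * a k := hbk.2
    have hkpos : (0 : ℝ) < (k : ℝ) + 3 := by positivity
    have h9 : c₁ * a (k + 1) * ((k : ℝ) + 3) ≤ c₁ * ((k : ℝ) + 3) * a k := by
      calc c₁ * a (k + 1) * ((k : ℝ) + 3) ≤ τ (k + 1) * ((k : ℝ) + 3) := by
            apply mul_le_mul_of_nonneg_right h7 hkpos.le
        _ ≤ τ k := h5
        _ ≤ c₂ * a k := h8
        _ ≤ c₁ * ((k : ℝ) + 3) * a k := by
            apply mul_le_mul_of_nonneg_right h6 (hapos k).le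
    have := mul_pos hc₁ hkpos
    nlinarith [hapos (k + 1), hapos k]
  obtain ⟨N₁, f, hf⟩ := hUniv A ⟨⟨hapos, hAcomp, ha0, haratio⟩, hADa⟩
  -- a lower bound on l below N₀
  have hδex : ∀ N : ℕ, ∃ δ : ℝ, 0 < δ ∧ ∀ j, j < N → δ ≤ l j := by
    intro N
    induction N with
    | zero => exact ⟨1, one_pos, fun j hj => absurd hj (Nat.not_lt_zero j)⟩
    | succ N ih =>
      obtain ⟨δ, hδ, h⟩ := ih
      refine ⟨min δ (l N), lt_min hδ (hlpos N), fun j hj => ?_⟩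
      rcases Nat.lt_succ_iff_lt_or_eq.mp hj with h' | rfl
      · exact le_trans (min_le_left _ _) (h j h')
      · exact min_le_right _ _
  obtain ⟨δ, hδpos, hδ⟩ := hδex N₀
  have hfa : ∀ᶠ k in atTop, a k < δ := ha0.eventually (gt_mem_nhds hδpos)
  obtain ⟨K₂, hK₂⟩ := exists_nat_ge (2 / c₁)
  have harch2 : ∀ᶠ k : ℕ in atTop, 2 / c₁ ≤ (k : ℝ) + 2 := by
    filter_upwards [eventually_ge_atTop K₂] with k hk
    have : (K₂ : ℝ) ≤ (k : ℝ) := by exact_mod_cast hk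
    linarith
  obtain ⟨k, hk1, hk2, hk3, hk4, hk5⟩ :=
    (hτlea.and (hbound.and ((eventually_ge_atTop N₁).and (hfa.and harch2)))).exists
  set n := g k with hndef
  have hP := hgP k
  have hfk : a k = l (f k) := hf k hk3
  have hfkN₀ : N₀ ≤ f k := by
    by_contra hcon
    push_neg at hcon
    have := hδ (f k) hcon
    rw [← hfk] at this
    linarith
  have hup : l (f k) < l n := by
    rw [← hfk]
    have h1 : c₁ * a k ≤ τ k := hk2.1
    have h2 : τ k < 2 * r (n + 1) := hτ2 k
    have h3 : ((k : ℝ) + 2) * r (n + 1) < l n := hP.2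
    have h4 : 2 ≤ ((k : ℝ) + 2) * c₁ := (div_le_iff₀ hc₁).mp hk5
    nlinarith [hrpos (n + 1), hapos k]
  have hlow : l (n + 1) < l (f k) := by
    rw [← hfk]
    have h1 := hτ1 k
    have h2 := hlr (n + 1)
    linarith
  have h6 : n < f k := by
    by_contra hcon
    push_neg at hcon
    exact absurd (hanti (f k) n hfkN₀ hcon) (not_le.mpr hup)
  have h7 : f k < n + 1 := by
    by_contra hcon
    push_neg at hcon
    have : l (f k) ≤ l (n + 1) := hanti (n + 1) (f k) (by omega) hcon
    linarith
  omega
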